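/- Consider the group homomorphism Ψ from U(1) × SU(2) × SU(3) to U(2) × U(3) given by Ψ(c, g, h) = (c³·g, c^{−2}·h). Then the image of Ψ is exactly the subgroup S(U(2)×U(3)) = {(A, B) ∈ U(2)×U(3) : det A · det B = 1}. -/

import Mathlib

/-- The special unitary group `SU(n)`, as the subgroup of the unitary group
`Matrix.unitaryGroup n ℂ` consisting of the matrices of determinant `1`. -/
noncomputable def SU (n : Type*) [DecidableEq n] [Fintype n] :
    Subgroup (Matrix.unitaryGroup n ℂ) :=
  MonoidHom.ker ((Units.map (Matrix.detMonoidHom : Matrix n n ℂ →* ℂ)).comp Unitary.toUnits)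

/-- Scalar unitary matrices: `c ↦ c • 1`. -/
noncomputable def scalarU (n : Type*) [DecidableEq n] [Fintype n] :
    Circle →* Matrix.unitaryGroup n ℂ where
  toFun c := ⟨(c : ℂ) • (1 : Matrix n n ℂ), by
    rw [Matrix.mem_unitaryGroup_iff, star_smul, star_one, Matrix.smul_mul, Matrix.mul_smul,
      mul_one, smul_smul, Complex.star_def, Complex.mul_conj, Circle.normSq_coe]
    simp⟩
  map_one' := by
    apply Subtype.ext
    simp
  map_mul' c d := by
    apply Subtype.ext
    show ((c * d : Circle) : ℂ) • (1 : Matrix n n ℂ) = ((c : ℂ) • 1) * ((d : ℂ) • 1)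
    rw [Matrix.smul_mul, Matrix.mul_smul, mul_one, smul_smul, Circle.coe_mul]

@[simp] lemma scalarU_coe {n : Type*} [DecidableEq n] [Fintype n] (c : Circle) :
    ((scalarU n c : Matrix.unitaryGroup n ℂ) : Matrix n n ℂ) = (c : ℂ) • 1 := rfl

@[simp, norm_cast] lemma Circle.coe_zpow' (c : Circle) (k : ℤ) :
    ((c ^ k : Circle) : ℂ) = (c : ℂ) ^ k := by
  induction k using Int.rec with
  | ofNat m => rfl
  | negSucc m => simp [zpow_negSucc]

lemma scalarU_zpow_mul_coe {n : Type*} [DecidableEq n] [Fintype n] (c : Circle) (k : ℤ)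
    (u : Matrix.unitaryGroup n ℂ) :
    ((scalarU n c ^ k * u : Matrix.unitaryGroup n ℂ) : Matrix n n ℂ) =
      (c : ℂ) ^ k • (u : Matrix n n ℂ) := by
  rw [← map_zpow]
  show (((c ^ k : Circle) : ℂ) • (1 : Matrix n n ℂ)) * u = _
  rw [Matrix.smul_mul, one_mul, Circle.coe_zpow']

lemma mem_SU_iff {n : Type*} [DecidableEq n] [Fintype n] (g : Matrix.unitaryGroup n ℂ) :
    g ∈ SU n ↔ (g : Matrix n n ℂ).det = 1 := by
  rw [SU, MonoidHom.mem_ker, MonoidHom.comp_apply, Units.ext_iff]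
  rfl


lemma scalarU_zpow_mul_key {n : Type*} [DecidableEq n] [Fintype n] (c d : Circle) (k : ℤ)
    (u v : Matrix.unitaryGroup n ℂ) :
    scalarU n (c * d) ^ k * (u * v) = (scalarU n c ^ k * u) * (scalarU n d ^ k * v) := by
  apply Subtype.ext
  conv_rhs => rw [Submonoid.coe_mul, scalarU_zpow_mul_coe, scalarU_zpow_mul_coe]
  rw [scalarU_zpow_mul_coe, Submonoid.coe_mul, Circle.coe_mul, mul_zpow, Matrix.smul_mul,
    Matrix.mul_smul, smul_smul]

/-- The homomorphism `Ψ`. -/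
noncomputable def PsiSM :
    (Circle × SU (Fin 2) × SU (Fin 3)) →*
      Matrix.unitaryGroup (Fin 2) ℂ × Matrix.unitaryGroup (Fin 3) ℂ where
  toFun x :=
    (scalarU (Fin 2) x.1 ^ (3 : ℤ) * (x.2.1 : Matrix.unitaryGroup (Fin 2) ℂ),
     scalarU (Fin 3) x.1 ^ (-2 : ℤ) * (x.2.2 : Matrix.unitaryGroup (Fin 3) ℂ))
  map_one' := by simp
  map_mul' x y :=
    Prod.ext (scalarU_zpow_mul_key x.1 y.1 3 _ _) (scalarU_zpow_mul_key x.1 y.1 (-2) _ _)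

/-- **Surjectivity half of the additive realization of `G_SM` (Section 5.1).**
There is a group homomorphism `Ψ : U(1) × SU(2) × SU(3) →* U(2) × U(3)`,
`Ψ(c, g, h) = (c³·g, c⁻²·h)`, whose image is exactly the subgroup
`S(U(2)×U(3)) = {(A, B) ∈ U(2)×U(3) : det A · det B = 1}`. -/
theorem range_of_additive_realization :
    ∃ Ψ : (Circle × SU (Fin 2) × SU (Fin 3)) →*
        Matrix.unitaryGroup (Fin 2) ℂ × Matrix.unitaryGroup (Fin 3) ℂ,
      (∀ x : Circle × SU (Fin 2) × SU (Fin 3),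
        ((Ψ x).1 : Matrix (Fin 2) (Fin 2) ℂ) =
          (x.1 : ℂ) ^ (3 : ℤ) •
            ((x.2.1 : Matrix.unitaryGroup (Fin 2) ℂ) : Matrix (Fin 2) (Fin 2) ℂ) ∧
        ((Ψ x).2 : Matrix (Fin 3) (Fin 3) ℂ) =
          (x.1 : ℂ) ^ (-2 : ℤ) •
            ((x.2.2 : Matrix.unitaryGroup (Fin 3) ℂ) : Matrix (Fin 3) (Fin 3) ℂ)) ∧
      (∀ y : Matrix.unitaryGroup (Fin 2) ℂ × Matrix.unitaryGroup (Fin 3) ℂ,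
        y ∈ Ψ.range ↔
          (y.1 : Matrix (Fin 2) (Fin 2) ℂ).det * (y.2 : Matrix (Fin 3) (Fin 3) ℂ).det = 1) := by
  refine ⟨PsiSM, ?_, ?_⟩
  · intro x
    exact ⟨scalarU_zpow_mul_coe _ _ _, scalarU_zpow_mul_coe _ _ _⟩
  · intro y
    constructor
    · rintro ⟨x, rfl⟩
      have h2 : ((x.2.1 : Matrix.unitaryGroup (Fin 2) ℂ) : Matrix (Fin 2) (Fin 2) ℂ).det = 1 :=
        (mem_SU_iff _).1 x.2.1.2
      have h3 : ((x.2.2 : Matrix.unitaryGroup (Fin 3) ℂ) : Matrix (Fin 3) (Fin 3) ℂ).det = 1 :=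
        (mem_SU_iff _).1 x.2.2.2
      have e1 : ((PsiSM x).1 : Matrix (Fin 2) (Fin 2) ℂ) =
          (x.1 : ℂ) ^ (3 : ℤ) • ((x.2.1 : Matrix.unitaryGroup (Fin 2) ℂ) : Matrix (Fin 2) (Fin 2) ℂ) :=
        scalarU_zpow_mul_coe _ _ _
      have e2 : ((PsiSM x).2 : Matrix (Fin 3) (Fin 3) ℂ) =
          (x.1 : ℂ) ^ (-2 : ℤ) • ((x.2.2 : Matrix.unitaryGroup (Fin 3) ℂ) : Matrix (Fin 3) (Fin 3) ℂ) :=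
        scalarU_zpow_mul_coe _ _ _
      rw [e1, e2, Matrix.det_smul, Matrix.det_smul, h2, h3]
      have hc : (x.1 : ℂ) ≠ 0 := Circle.coe_ne_zero _
      rw [mul_one, mul_one, Fintype.card_fin, Fintype.card_fin,
        ← zpow_natCast ((x.1 : ℂ) ^ (3 : ℤ)), ← zpow_natCast ((x.1 : ℂ) ^ (-2 : ℤ)),
        ← zpow_mul, ← zpow_mul, ← zpow_add₀ hc]
      norm_num
    · intro hdet
      -- pick a 6-th root of det y.1 on the circle
      obtain ⟨w, hw⟩ := IsAlgClosed.exists_pow_nat_eq ((y.1 : Matrix (Fin 2) (Fin 2) ℂ).det)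
        (n := 6) (by norm_num)
      have hnsq : Complex.normSq ((y.1 : Matrix (Fin 2) (Fin 2) ℂ).det) = 1 := by
        have hu := (Matrix.det_of_mem_unitary y.1.2).2
        rw [Complex.star_def, Complex.mul_conj] at hu
        exact_mod_cast hu
      have hdet1 : ‖(y.1 : Matrix (Fin 2) (Fin 2) ℂ).det‖ = 1 := by
        nlinarith [Complex.normSq_eq_norm_sq ((y.1 : Matrix (Fin 2) (Fin 2) ℂ).det),
          norm_nonneg ((y.1 : Matrix (Fin 2) (Fin 2) ℂ).det)]
      have hwnorm : ‖w‖ = 1 := by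
        have h6 : ‖w‖ ^ 6 = 1 := by rw [← norm_pow, hw, hdet1]
        nlinarith [norm_nonneg w, sq_nonneg (‖w‖ - 1), sq_nonneg (‖w‖ + 1),
          sq_nonneg (‖w‖ ^ 2 - 1), sq_nonneg (‖w‖ ^ 3 - 1), sq_nonneg (‖w‖ ^ 2 + ‖w‖)]
      have hwne : w ≠ 0 := by intro h0; rw [h0] at hwnorm; simp at hwnorm
      set c : Circle := ⟨w, mem_sphere_zero_iff_norm.2 hwnorm⟩ with hc
      have hcw : (c : ℂ) = w := rfl
      set g : Matrix.unitaryGroup (Fin 2) ℂ := scalarU (Fin 2) c ^ (-3 : ℤ) * y.1 with hg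
      set h : Matrix.unitaryGroup (Fin 3) ℂ := scalarU (Fin 3) c ^ (2 : ℤ) * y.2 with hh
      have hgmem : g ∈ SU (Fin 2) := by
        rw [mem_SU_iff, hg, scalarU_zpow_mul_coe, Matrix.det_smul, Fintype.card_fin, hcw, ← hw,
          ← zpow_natCast (w ^ (-3 : ℤ)), ← zpow_mul, ← zpow_natCast w, ← zpow_add₀ hwne]
        norm_num
      have hhmem : h ∈ SU (Fin 3) := by
        rw [mem_SU_iff, hh, scalarU_zpow_mul_coe, Matrix.det_smul, Fintype.card_fin, hcw,
          ← zpow_natCast (w ^ (2 : ℤ)), ← zpow_mul,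
          show (2 : ℤ) * ((3 : ℕ) : ℤ) = ((6 : ℕ) : ℤ) by norm_num, zpow_natCast, hw]
        exact hdet
      refine ⟨⟨c, ⟨g, hgmem⟩, ⟨h, hhmem⟩⟩, ?_⟩
      refine Prod.ext ?_ ?_
      · show scalarU (Fin 2) c ^ (3 : ℤ) * g = y.1
        rw [hg, ← mul_assoc, ← zpow_add]
        norm_num
      · show scalarU (Fin 3) c ^ (-2 : ℤ) * h = y.2
        rw [hh, ← mul_assoc, ← zpow_add]
        norm_num
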